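/- For any three points a, b, c in a metric space, any real z ≥ 1, and any 0 < s ≤ 1, we have |dist(a,c)^z − dist(b,c)^z| ≤ s · dist(a,c)^z + (3z/s)^{z-1} · dist(a,b)^z. -/

import Mathlib

open Real

private lemma aux_mean2 {w₁ w₂ x₁ x₂ p : ℝ} (hw₁ : 0 ≤ w₁) (hw₂ : 0 ≤ w₂)
    (hx₁ : 0 ≤ x₁) (hx₂ : 0 ≤ x₂) (hw : w₁ + w₂ = 1) (hp : 1 ≤ p) :
    (w₁ * x₁ + w₂ * x₂) ^ p ≤ w₁ * x₁ ^ p + w₂ * x₂ ^ p := by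
  have h := Real.rpow_arith_mean_le_arith_mean_rpow Finset.univ ![w₁, w₂] ![x₁, x₂]
    (by intro i _; fin_cases i <;> assumption)
    (by simp [Fin.sum_univ_succ, hw])
    (by intro i _; fin_cases i <;> assumption) hp
  simpa [Fin.sum_univ_succ] using h

private lemma aux_split {x y l z : ℝ} (hx : 0 ≤ x) (hy : 0 ≤ y) (hl0 : 0 < l)
    (hl1 : l < 1) (hz : 1 ≤ z) :
    (x + y) ^ z ≤ l ^ (1 - z) * x ^ z + (1 - l) ^ (1 - z) * y ^ z := by
  have hl1' : 0 < 1 - l := by linarith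
  have hxy : x + y = l * (x / l) + (1 - l) * (y / (1 - l)) := by
    field_simp
  rw [hxy]
  have h := aux_mean2 (le_of_lt hl0) (le_of_lt hl1') (div_nonneg hx hl0.le)
    (div_nonneg hy hl1'.le) (by ring) hz
  refine h.trans_eq ?_
  rw [Real.div_rpow hx hl0.le, Real.div_rpow hy hl1'.le,
    Real.rpow_sub hl0, Real.rpow_sub hl1', Real.rpow_one]
  field_simp
  simp only [pow_one, Real.rpow_one]
  ring

private lemma aux_key {m M d z s : ℝ} (hm : 0 ≤ m) (hd : 0 ≤ d) (hMd : M ≤ m + d)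
    (hmM : m ≤ M) (hz : 1 ≤ z) (hs0 : 0 < s) (hs1 : s ≤ 1) :
    M ^ z - m ^ z ≤ s * m ^ z + (3 * z / s) ^ (z - 1) * d ^ z := by
  have hz0 : (0:ℝ) < z := by linarith
  have h3z : (0:ℝ) < 3 * z := by linarith
  set t : ℝ := s / (3 * z) with ht
  have ht0 : 0 < t := div_pos hs0 h3z
  have hts : t * (3 * z) = s := by
    rw [ht]; field_simp
  have ht3 : t ≤ 1/3 := by nlinarith
  have hl0 : (0:ℝ) < 1 - t := by linarith
  have hl1 : 1 - t < 1 := by linarith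
  -- (1-t)^(z-1) ≥ 1 - s/3
  have hber : 1 - s/3 ≤ (1 - t) ^ (z - 1) := by
    rcases le_total z 2 with h2 | h2
    · have h1 : (1 - t) ^ (1:ℝ) ≤ (1 - t) ^ (z - 1) :=
        Real.rpow_le_rpow_of_exponent_ge hl0 hl1.le (by linarith)
      rw [Real.rpow_one] at h1
      have hts3 : t ≤ s/3 := by nlinarith
      linarith
    · have h1 : 1 + (z - 1) * (-t) ≤ (1 + (-t)) ^ (z - 1) :=
        one_add_mul_self_le_rpow_one_add (by linarith) (by linarith)
      have he : 1 + (-t) = 1 - t := by ring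
      rw [he] at h1
      have h2' : 1 - s/3 ≤ 1 + (z - 1) * (-t) := by
        have hkey : (z - 1) * t ≤ s / 3 := by nlinarith
        linarith
      linarith
  have hberpos : 0 < (1 - t) ^ (z - 1) := Real.rpow_pos_of_pos hl0 _
  -- (1-t)^(1-z) ≤ 1 + s
  have hpow : (1 - t) ^ (1 - z) ≤ 1 + s := by
    have he : (1 - t) ^ (1 - z) = ((1 - t) ^ (z - 1))⁻¹ := by
      rw [show (1 - z) = -(z - 1) by ring, Real.rpow_neg hl0.le]
    rw [he]
    have h1 : ((1 - t) ^ (z - 1))⁻¹ ≤ (1 - s/3)⁻¹ :=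
      inv_anti₀ (by nlinarith) hber
    have h2 : (1 - s/3)⁻¹ ≤ 1 + s := by
      rw [inv_le_iff_one_le_mul₀' (by nlinarith : (0:ℝ) < 1 - s/3)]
      nlinarith
    linarith
  -- identify (3z/s)^(z-1) with t^(1-z)
  have htsr : t ^ (1 - z) = (3 * z / s) ^ (z - 1) := by
    have hinv : (3 * z / s) = t⁻¹ := by
      rw [ht]; field_simp
    rw [hinv, Real.inv_rpow ht0.le, show (1 - z) = -(z - 1) by ring,
      Real.rpow_neg ht0.le]
  have hMz : M ^ z ≤ (m + d) ^ z :=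
    Real.rpow_le_rpow (le_trans hm hmM) hMd hz0.le
  have hsplit := aux_split hm hd hl0 hl1 hz
  have h1t : 1 - (1 - t) = t := by ring
  rw [h1t] at hsplit
  have hmz : 0 ≤ m ^ z := Real.rpow_nonneg hm z
  have hfin : (1 - t) ^ (1 - z) * m ^ z ≤ (1 + s) * m ^ z :=
    mul_le_mul_of_nonneg_right hpow hmz
  calc M ^ z - m ^ z ≤ (m + d) ^ z - m ^ z := by linarith
    _ ≤ (1 - t) ^ (1 - z) * m ^ z + t ^ (1 - z) * d ^ z - m ^ z := by linarith
    _ ≤ (1 + s) * m ^ z + t ^ (1 - z) * d ^ z - m ^ z := by linarith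
    _ = s * m ^ z + (3 * z / s) ^ (z - 1) * d ^ z := by rw [htsr]; ring

theorem generalized_triangle_pow_diff
    {X : Type*} [MetricSpace X] (a b c : X) (z s : ℝ)
    (hz : 1 ≤ z) (hs0 : 0 < s) (hs1 : s ≤ 1) :
    |dist a c ^ z - dist b c ^ z| ≤
      s * dist a c ^ z + (3 * z / s) ^ (z - 1) * dist a b ^ z := by
  have hz0 : (0:ℝ) ≤ z := by linarith
  set u := dist a c
  set v := dist b c
  set d := dist a b
  have hu : 0 ≤ u := dist_nonneg
  have hv : 0 ≤ v := dist_nonneg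
  have hd : 0 ≤ d := dist_nonneg
  rcases le_total u v with h | h
  · -- v is max
    have habs : |u ^ z - v ^ z| = v ^ z - u ^ z := by
      rw [abs_sub_comm, abs_of_nonneg (sub_nonneg.2 (Real.rpow_le_rpow hu h hz0))]
    have hvd : v ≤ u + d := by
      calc v ≤ dist b a + dist a c := dist_triangle b a c
        _ = u + d := by rw [dist_comm b a]; ring
    rw [habs]
    exact aux_key hu hd hvd h hz hs0 hs1
  · -- u is max
    have habs : |u ^ z - v ^ z| = u ^ z - v ^ z :=
      abs_of_nonneg (sub_nonneg.2 (Real.rpow_le_rpow hv h hz0))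
    have hud : u ≤ v + d := by
      calc u ≤ dist a b + dist b c := dist_triangle a b c
        _ = v + d := by ring
    rw [habs]
    have hkey := aux_key hv hd hud h hz hs0 hs1
    have : s * v ^ z ≤ s * u ^ z :=
      mul_le_mul_of_nonneg_left (Real.rpow_le_rpow hv h hz0) hs0.le
    linarith
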